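/- arXiv:math/0503678 — 7 statements merged into one kernel-verified Lean document; each statement's English description precedes it below -/
import Mathlib

section
/- Let A be a factorial design in the design space D, let {C_t : t ∈ T} be an SOCB on D with coefficients b_t of A, and fix 1 ≤ l ≤ k. Let B be the projection of A onto the first l factors, i.e., the multiset image of A under the projection D → Π_{i ≤ l} Fin (s i). Then for every y ∈ Π_{i ≤ l} Fin (s i), the multiplicity of y in B equals N_2 · Σ_{t ∈ T_1} b_t · Π_{i ≤ l} C^i_{t i}(y i), where N_2 = Π_{i > l} s i and T_1 = { t ∈ T : t i = 0 for all i > l }. -/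
open Finset

private lemma aux_sum_map_indicator {α : Type*} (A : Multiset α) (P : α → Prop)
    [DecidablePred P] :
    (A.map fun x => if P x then (1:ℝ) else 0).sum = ((A.filter P).card : ℝ) := by
  induction A using Multiset.induction_on with
  | empty => simp
  | cons a A ih =>
    by_cases h : P a <;> simp [Multiset.filter_cons, h, ih, add_comm]

private lemma aux_sum_swap {α β : Type*} (F : Finset β) (A : Multiset α) (g : β → α → ℝ) :
    ∑ t ∈ F, (A.map (g t)).sum = (A.map fun x => ∑ t ∈ F, g t x).sum := by
  induction A using Multiset.induction_on with
  | empty => simp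
  | cons a A ih => simp [ih, Finset.sum_add_distrib]

private lemma aux_col_orth {n : ℕ} (hn : 1 ≤ n) (C : Fin n → Fin n → ℝ)
    (h : ∀ u v, ∑ x, C u x * C v x = if u = v then (n:ℝ) else 0) :
    ∀ u v, ∑ j, C j u * C j v = if u = v then (n:ℝ) else 0 := by
  intro u v
  set M : Matrix (Fin n) (Fin n) ℝ := Matrix.of C with hMdef
  have hn0 : (n:ℝ) ≠ 0 := Nat.cast_ne_zero.mpr (by omega)
  have hM : M * M.transpose = (n : ℝ) • 1 := by
    ext a c
    simp [Matrix.mul_apply, M, h a c, Matrix.one_apply, apply_ite ((n:ℝ) * ·)]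
  have h1 : M * ((n:ℝ)⁻¹ • M.transpose) = 1 := by
    rw [Matrix.mul_smul, hM, smul_smul, inv_mul_cancel₀ hn0, one_smul]
  have h2 : ((n:ℝ)⁻¹ • M.transpose) * M = 1 := mul_eq_one_comm.mp h1
  have h3 : M.transpose * M = (n:ℝ) • 1 := by
    have := congrArg (fun X => (n:ℝ) • X) h2
    simpa [Matrix.smul_mul, smul_smul, mul_inv_cancel₀ hn0] using this
  have h4 := congrFun (congrFun h3 u) v
  simpa [Matrix.mul_apply, Matrix.transpose_apply, M, Matrix.one_apply,
    apply_ite ((n:ℝ) * ·), mul_comm] using h4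

/-- **Corollary 2.1.** Let `B` be the projection of `A` onto the first
`l` factors. Then the multiplicity of a point `y` in `B` is
`N₂ · Σ_{t ∈ T₁} b_t · Π_{i ≤ l} C^i_{t i}(y i)`, where `N₂ = Π_{i > l} s i` and
`T₁ = { t : t i = 0 for all i > l }`. -/
theorem indicator_of_projection
    (k : ℕ) (hk : 1 ≤ k) (s : Fin k → ℕ) (hs : ∀ i, 1 ≤ s i)
    (C : ∀ i : Fin k, Fin (s i) → Fin (s i) → ℝ)
    (horth : ∀ (i : Fin k) (u v : Fin (s i)),
      ∑ x : Fin (s i), C i u x * C i v x = if u = v then (s i : ℝ) else 0)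
    (hC0 : ∀ (i : Fin k) (x : Fin (s i)), C i ⟨0, hs i⟩ x = 1)
    (A : Multiset (∀ i, Fin (s i)))
    (b : (∀ i, Fin (s i)) → ℝ)
    (hb : ∀ t : (∀ i, Fin (s i)),
      b t = (1 / ((∏ i, s i : ℕ) : ℝ)) * (A.map (fun x => ∏ i, C i (t i) (x i))).sum)
    (l : ℕ) (hl1 : 1 ≤ l) (hlk : l ≤ k)
    (y : ∀ i : Fin l, Fin (s (Fin.castLE hlk i))) :
    (((A.map (fun x => (fun i : Fin l => x (Fin.castLE hlk i)))).count y : ℝ)) =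
      ((∏ i ∈ Finset.univ.filter (fun i : Fin k => l ≤ (i : ℕ)), s i : ℕ) : ℝ) *
        ∑ t ∈ Finset.univ.filter
            (fun t : (∀ i, Fin (s i)) => ∀ i : Fin k, l ≤ (i : ℕ) → (t i : ℕ) = 0),
          b t * ∏ i : Fin l, C (Fin.castLE hlk i) (t (Fin.castLE hlk i)) (y i) := by
  classical
  set T₁ := Finset.univ.filter
      (fun t : (∀ i, Fin (s i)) => ∀ i : Fin k, l ≤ (i : ℕ) → (t i : ℕ) = 0) with hT₁
  -- realization of `Fin l` indices as `Fin k` indices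
  have hcast : ∀ i : Fin l, ∀ h : ((Fin.castLE hlk i : Fin k) : ℕ) < l,
      (⟨((Fin.castLE hlk i : Fin k) : ℕ), h⟩ : Fin l) = i := fun i h => Fin.ext rfl
  have hcast2 : ∀ (i : Fin k) (h : (i : ℕ) < l), Fin.castLE hlk ⟨(i : ℕ), h⟩ = i :=
    fun i h => Fin.ext rfl
  -- extension map
  set ext : (∀ i : Fin l, Fin (s (Fin.castLE hlk i))) → (∀ i, Fin (s i)) :=
    fun u i => if h : (i : ℕ) < l
      then ⟨(u ⟨(i : ℕ), h⟩ : ℕ),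
        lt_of_lt_of_eq (u ⟨(i : ℕ), h⟩).isLt (congrArg s (hcast2 i h))⟩
      else ⟨0, hs i⟩ with hext_def
  have hext : ∀ u (i : Fin l), ext u (Fin.castLE hlk i) = u i := by
    intro u i
    have h : ((Fin.castLE hlk i : Fin k) : ℕ) < l := i.isLt
    apply Fin.ext
    simp only [ext, dif_pos h]
    exact congrArg (fun j : Fin l => ((u j : ℕ))) (hcast i h)
  have hext_mem : ∀ u, ext u ∈ T₁ := by
    intro u
    simp only [T₁, Finset.mem_filter, Finset.mem_univ, true_and]
    intro i hi
    simp only [ext, dif_neg (not_lt.mpr hi)]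
  have hext_inv : ∀ t ∈ T₁, ext (fun i : Fin l => t (Fin.castLE hlk i)) = t := by
    intro t ht
    funext i
    by_cases h : (i : ℕ) < l
    · apply Fin.ext
      simp only [ext, dif_pos h]
      exact congrArg (fun j : Fin k => ((t j : ℕ))) (hcast2 i h)
    · apply Fin.ext
      simp only [ext, dif_neg h]
      exact ((Finset.mem_filter.mp ht).2 i (not_lt.mp h)).symm
  -- product over Fin k of something that is 1 above l
  have hprod_split : ∀ (f : ∀ i : Fin k, ℝ), (∀ i : Fin k, l ≤ (i : ℕ) → f i = 1) →
      ∏ i, f i = ∏ i : Fin l, f (Fin.castLE hlk i) := by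
    intro f hf
    rw [← Finset.prod_filter_mul_prod_filter_not Finset.univ (fun i : Fin k => (i : ℕ) < l)]
    have h2 : ∏ i ∈ Finset.univ.filter (fun i : Fin k => ¬ (i : ℕ) < l), f i = 1 := by
      apply Finset.prod_eq_one
      intro i hi
      exact hf i (not_lt.mp (Finset.mem_filter.mp hi).2)
    rw [h2, mul_one]
    refine (Finset.prod_nbij' (fun i : Fin l => Fin.castLE hlk i)
      (fun i : Fin k => if h : (i : ℕ) < l then (⟨(i : ℕ), h⟩ : Fin l) else ⟨0, hl1⟩)
      ?_ ?_ ?_ ?_ ?_).symm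
    · intro a _; simp [a.isLt]
    · intro a _; simp
    · intro a _
      have h : ((Fin.castLE hlk a : Fin k) : ℕ) < l := a.isLt
      rw [dif_pos h]
      exact hcast a h
    · intro a ha
      have h : (a : ℕ) < l := (Finset.mem_filter.mp ha).2
      rw [dif_pos h]; exact hcast2 a h
    · intro a _; rfl
  set N₁ : ℝ := ∏ i : Fin l, (s (Fin.castLE hlk i) : ℝ) with hN₁
  set p : (∀ i, Fin (s i)) → (∀ i : Fin l, Fin (s (Fin.castLE hlk i))) :=
    fun x => fun i : Fin l => x (Fin.castLE hlk i) with hp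
  -- the key pointwise identity
  have key : ∀ x : (∀ i, Fin (s i)),
      ∑ t ∈ T₁, (∏ i, C i (t i) (x i)) *
          (∏ i : Fin l, C (Fin.castLE hlk i) (t (Fin.castLE hlk i)) (y i))
        = N₁ * (if p x = y then (1:ℝ) else 0) := by
    intro x
    have step1 : ∑ t ∈ T₁, (∏ i, C i (t i) (x i)) *
          (∏ i : Fin l, C (Fin.castLE hlk i) (t (Fin.castLE hlk i)) (y i))
        = ∑ u : (∀ i : Fin l, Fin (s (Fin.castLE hlk i))),
            ∏ i : Fin l, (C (Fin.castLE hlk i) (u i) (x (Fin.castLE hlk i)) *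
              C (Fin.castLE hlk i) (u i) (y i)) := by
      refine (Finset.sum_nbij' ext (fun t => fun i : Fin l => t (Fin.castLE hlk i))
        (fun u _ => hext_mem u) (fun t _ => Finset.mem_univ _)
        ?_ (fun t ht => hext_inv t ht) ?_).symm
      · intro u _
        funext i
        exact hext u i
      · intro u _
        have h1 : ∏ i, C i (ext u i) (x i)
            = ∏ i : Fin l, C (Fin.castLE hlk i) (ext u (Fin.castLE hlk i))
                (x (Fin.castLE hlk i)) := by
          apply hprod_split
          intro i hi
          have : ext u i = ⟨0, hs i⟩ := by
            apply Fin.ext; simp only [ext, dif_neg (not_lt.mpr hi)]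
          rw [this, hC0]
        rw [h1, ← Finset.prod_mul_distrib]
        apply Finset.prod_congr rfl
        intro i _
        rw [hext u i]
    rw [step1]
    have step2 : ∑ u : (∀ i : Fin l, Fin (s (Fin.castLE hlk i))),
            ∏ i : Fin l, (C (Fin.castLE hlk i) (u i) (x (Fin.castLE hlk i)) *
              C (Fin.castLE hlk i) (u i) (y i))
        = ∏ i : Fin l, ∑ j : Fin (s (Fin.castLE hlk i)),
            C (Fin.castLE hlk i) j (x (Fin.castLE hlk i)) * C (Fin.castLE hlk i) j (y i) := by
      rw [Finset.prod_univ_sum]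
      rw [← Fintype.piFinset_univ]
    rw [step2]
    have step3 : ∀ i : Fin l, ∑ j : Fin (s (Fin.castLE hlk i)),
            C (Fin.castLE hlk i) j (x (Fin.castLE hlk i)) * C (Fin.castLE hlk i) j (y i)
        = if x (Fin.castLE hlk i) = y i then (s (Fin.castLE hlk i) : ℝ) else 0 :=
      fun i => aux_col_orth (hs _) (C (Fin.castLE hlk i)) (horth _) _ _
    simp only [step3]
    by_cases hxy : p x = y
    · rw [if_pos hxy]
      rw [mul_one, hN₁]
      apply Finset.prod_congr rfl
      intro i _
      rw [if_pos (congrFun hxy i)]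
    · rw [if_neg hxy, mul_zero]
      have : ∃ i : Fin l, x (Fin.castLE hlk i) ≠ y i := by
        by_contra hcon
        push_neg at hcon
        exact hxy (funext hcon)
      obtain ⟨i, hi⟩ := this
      exact Finset.prod_eq_zero (Finset.mem_univ i) (if_neg hi)
  -- cast of the total number of points
  have hN : ((∏ i, s i : ℕ) : ℝ) =
      ((∏ i ∈ Finset.univ.filter (fun i : Fin k => l ≤ (i : ℕ)), s i : ℕ) : ℝ) * N₁ := by
    push_cast
    rw [← Finset.prod_filter_mul_prod_filter_not Finset.univ (fun i : Fin k => l ≤ (i : ℕ))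
      (fun i : Fin k => (s i : ℝ))]
    congr 1
    have : Finset.univ.filter (fun i : Fin k => ¬ l ≤ (i : ℕ))
        = Finset.univ.filter (fun i : Fin k => (i : ℕ) < l) := by
      apply Finset.filter_congr; intro i _; simp [not_le]
    rw [this, hN₁]
    refine (Finset.prod_nbij' (fun i : Fin l => Fin.castLE hlk i)
      (fun i : Fin k => if h : (i : ℕ) < l then (⟨(i : ℕ), h⟩ : Fin l) else ⟨0, hl1⟩)
      ?_ ?_ ?_ ?_ ?_).symm
    · intro a _; simp [a.isLt]
    · intro a _; simp
    · intro a _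
      have h : ((Fin.castLE hlk a : Fin k) : ℕ) < l := a.isLt
      rw [dif_pos h]
      exact hcast a h
    · intro a ha
      have h : (a : ℕ) < l := (Finset.mem_filter.mp ha).2
      rw [dif_pos h]; exact hcast2 a h
    · intro a _; rfl
  have hNpos : (0:ℝ) < ((∏ i, s i : ℕ) : ℝ) := by
    have : 0 < ∏ i, s i := Finset.prod_pos (fun i _ => hs i)
    exact_mod_cast this
  -- main computation
  have main : ∑ t ∈ T₁,
        b t * ∏ i : Fin l, C (Fin.castLE hlk i) (t (Fin.castLE hlk i)) (y i)
      = (1 / ((∏ i, s i : ℕ) : ℝ)) * N₁ *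
          ((A.filter (fun x => p x = y)).card : ℝ) := by
    have e1 : ∀ t ∈ T₁,
        b t * ∏ i : Fin l, C (Fin.castLE hlk i) (t (Fin.castLE hlk i)) (y i)
        = (1 / ((∏ i, s i : ℕ) : ℝ)) *
          (A.map (fun x => (∏ i, C i (t i) (x i)) *
            ∏ i : Fin l, C (Fin.castLE hlk i) (t (Fin.castLE hlk i)) (y i))).sum := by
      intro t _
      rw [hb t, mul_assoc]
      congr 1
      rw [Multiset.sum_map_mul_right]
    rw [Finset.sum_congr rfl e1, ← Finset.mul_sum]
    rw [aux_sum_swap]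
    have e2 : (A.map fun x => ∑ t ∈ T₁, (∏ i, C i (t i) (x i)) *
          ∏ i : Fin l, C (Fin.castLE hlk i) (t (Fin.castLE hlk i)) (y i)).sum
        = (A.map fun x => N₁ * (if p x = y then (1:ℝ) else 0)).sum := by
      congr 1
      apply Multiset.map_congr rfl
      intro x _
      exact key x
    rw [e2, Multiset.sum_map_mul_left, aux_sum_map_indicator A (fun x => p x = y)]
    ring
  rw [main, Multiset.count_map]
  have e3 : (A.filter fun a => y = p a) = A.filter (fun x => p x = y) := by
    apply Multiset.filter_congr
    intro x _
    constructor <;> exact Eq.symm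
  rw [e3]
  set N₂ : ℝ := ((∏ i ∈ Finset.univ.filter (fun i : Fin k => l ≤ (i : ℕ)), s i : ℕ) : ℝ)
  set c : ℝ := ((A.filter (fun x => p x = y)).card : ℝ)
  have h1 : N₂ * (1 / ((∏ i, s i : ℕ) : ℝ) * N₁ * c)
      = (N₂ * N₁) * c / ((∏ i, s i : ℕ) : ℝ) := by ring
  rw [h1, ← hN]
  exact (mul_div_cancel_left₀ c (ne_of_gt hNpos)).symm
end

section
/- Let A be a factorial design in the design space D, let {C_t : t ∈ T} be an SOCB on D with coefficients b_t of A, and let u, v ∈ T be disjoint, i.e., min(u i, v i) = 0 for every i. Then b_{u+v} = (1/N) · Σ_{x ∈ A} C_u(x) · C_v(x), where (u+v) i = u i + v i; consequently, if A is nonempty, then (1/n) · Σ_{x ∈ A} C_u(x) · C_v(x) = b_{u+v} / b_0. -/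
/-- **Corollary 2.2.** For disjoint `u, v ∈ T` (no common nonzero
coordinate), `b_{u+v} = (1/N) Σ_{x ∈ A} C_u(x) C_v(x)`; consequently, for a
nonempty design, the correlation `(1/n) Σ_{x ∈ A} C_u(x) C_v(x)` equals
`b_{u+v} / b_0`. -/
theorem coefficient_of_disjoint_contrasts
    (k : ℕ) (hk : 1 ≤ k) (s : Fin k → ℕ) (hs : ∀ i, 1 ≤ s i)
    (C : ∀ i : Fin k, Fin (s i) → Fin (s i) → ℝ)
    (horth : ∀ (i : Fin k) (u v : Fin (s i)),
      ∑ x : Fin (s i), C i u x * C i v x = if u = v then (s i : ℝ) else 0)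
    (hC0 : ∀ (i : Fin k) (x : Fin (s i)), C i ⟨0, hs i⟩ x = 1)
    (A : Multiset (∀ i, Fin (s i)))
    (b : (∀ i, Fin (s i)) → ℝ)
    (hb : ∀ t : (∀ i, Fin (s i)),
      b t = (1 / ((∏ i, s i : ℕ) : ℝ)) * (A.map (fun x => ∏ i, C i (t i) (x i))).sum)
    (u v w : ∀ i, Fin (s i))
    (hdisj : ∀ i, min ((u i : ℕ)) ((v i : ℕ)) = 0)
    (hw : ∀ i, (w i : ℕ) = (u i : ℕ) + (v i : ℕ)) :
    b w = (1 / ((∏ i, s i : ℕ) : ℝ)) *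
        (A.map (fun x => (∏ i, C i (u i) (x i)) * (∏ i, C i (v i) (x i)))).sum ∧
    (A ≠ 0 →
      (1 / (Multiset.card A : ℝ)) *
          (A.map (fun x => (∏ i, C i (u i) (x i)) * (∏ i, C i (v i) (x i)))).sum =
        b w / b (fun i => ⟨0, hs i⟩)) := by
  have key : ∀ x : (∀ i, Fin (s i)),
      (∏ i, C i (w i) (x i)) = (∏ i, C i (u i) (x i)) * (∏ i, C i (v i) (x i)) := by
    intro x
    rw [← Finset.prod_mul_distrib]
    refine Finset.prod_congr rfl fun i _ => ?_
    rcases Nat.min_eq_zero_iff.mp (hdisj i) with h | h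
    · have hu : u i = ⟨0, hs i⟩ := Fin.ext h
      have hwi : w i = v i := Fin.ext (by rw [hw i, h, Nat.zero_add])
      rw [hu, hwi, hC0, one_mul]
    · have hv : v i = ⟨0, hs i⟩ := Fin.ext h
      have hwi : w i = u i := Fin.ext (by rw [hw i, h, Nat.add_zero])
      rw [hv, hwi, hC0, mul_one]
  have hmap : (A.map (fun x => ∏ i, C i (w i) (x i)))
      = A.map (fun x => (∏ i, C i (u i) (x i)) * (∏ i, C i (v i) (x i))) :=
    Multiset.map_congr rfl fun x _ => key x
  have hfirst : b w = (1 / ((∏ i, s i : ℕ) : ℝ)) *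
      (A.map (fun x => (∏ i, C i (u i) (x i)) * (∏ i, C i (v i) (x i)))).sum := by
    rw [hb w, hmap]
  refine ⟨hfirst, fun hA => ?_⟩
  have hN : ((∏ i, s i : ℕ) : ℝ) ≠ 0 :=
    Nat.cast_ne_zero.mpr (Finset.prod_pos fun i _ => hs i).ne'
  have hn : (Multiset.card A : ℝ) ≠ 0 := by
    simpa using fun h => hA (Multiset.card_eq_zero.mp h)
  have hb0 : b (fun i => ⟨0, hs i⟩) =
      (1 / ((∏ i, s i : ℕ) : ℝ)) * (Multiset.card A : ℝ) := by
    rw [hb]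
    congr 1
    have : (A.map (fun x => ∏ i, C i ((fun i => (⟨0, hs i⟩ : Fin (s i))) i) (x i)))
        = A.map (fun _ => (1 : ℝ)) :=
      Multiset.map_congr rfl fun x _ => by simp [hC0]
    rw [this]
    simp
  rw [hfirst, hb0]
  rw [mul_div_mul_left _ _ (one_div_ne_zero hN), one_div, inv_mul_eq_div]
end

section
/- Let s ≥ 1 and let p_0, p_1, …, p_{s−1} be real polynomials such that p_j has degree exactly j for each j and Σ_{x=0}^{s−1} p_u(x) · p_v(x) = s if u = v and = 0 if u ≠ v. Then each p_j satisfies the reflection identity p_j(s − 1 − X) = (−1)^j · p_j(X) as an identity of polynomials. -/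
open Polynomial Finset

private lemma opr_span_aux (s : ℕ) (p : Fin s → Polynomial ℝ)
    (hdeg : ∀ j : Fin s, (p j).degree = ((j : ℕ) : WithBot ℕ)) :
    ∀ n : ℕ, n ≤ s → ∀ r : Polynomial ℝ, r.degree < (n : WithBot ℕ) →
      r ∈ Submodule.span ℝ (p '' {k : Fin s | (k : ℕ) < n}) := by
  intro n
  induction n with
  | zero =>
    intro _ r hr
    have : r = 0 := by
      rw [← Polynomial.degree_eq_bot]
      simpa using hr
    simp [this]
  | succ n IH =>
    intro hn r hr
    have hsub : (p '' {k : Fin s | (k : ℕ) < n}) ⊆ (p '' {k : Fin s | (k : ℕ) < n + 1}) :=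
      Set.image_mono (fun k hk => by simp only [Set.mem_setOf_eq] at *; omega)
    by_cases h0 : r.degree < (n : WithBot ℕ)
    · exact Submodule.span_mono hsub (IH (by omega) r h0)
    · have hge : (n : WithBot ℕ) ≤ r.degree := not_lt.mp h0
      have hr0 : r ≠ 0 := by
        intro h
        rw [h, Polynomial.degree_zero, le_bot_iff] at hge
        exact (by simp : ((n : ℕ) : WithBot ℕ) ≠ ⊥) hge
      have hdr : r.degree = (n : WithBot ℕ) := by
        rw [Polynomial.degree_eq_natDegree hr0] at hr hge ⊢
        simp only [Nat.cast_withBot, WithBot.coe_lt_coe, WithBot.coe_le_coe, WithBot.coe_eq_coe] at hr hge ⊢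
        omega
      have hns : n < s := by omega
      set d : Fin s := ⟨n, hns⟩ with hd
      have hpd0 : p d ≠ 0 := by
        intro h
        have := hdeg d
        rw [h, Polynomial.degree_zero] at this
        exact (by simp : (⊥ : WithBot ℕ) ≠ ((n : ℕ) : WithBot ℕ)) (by simpa using this)
      set c : ℝ := r.leadingCoeff / (p d).leadingCoeff with hc
      have hc0 : c ≠ 0 :=
        div_ne_zero (Polynomial.leadingCoeff_ne_zero.mpr hr0)
          (Polynomial.leadingCoeff_ne_zero.mpr hpd0)
      have hdsm : (c • p d).degree = (n : WithBot ℕ) := by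
        rw [Polynomial.smul_eq_C_mul, Polynomial.degree_C_mul hc0]
        simpa using hdeg d
      have hlcsm : (c • p d).leadingCoeff = r.leadingCoeff := by
        rw [Polynomial.smul_eq_C_mul, Polynomial.leadingCoeff_mul, Polynomial.leadingCoeff_C,
          hc, div_mul_cancel₀ _ (Polynomial.leadingCoeff_ne_zero.mpr hpd0)]
      have hlt : (r - c • p d).degree < (n : WithBot ℕ) := by
        have := Polynomial.degree_sub_lt (hdr.trans hdsm.symm) hr0 hlcsm.symm
        rwa [hdr] at this
      have hmem : (r - c • p d) ∈ Submodule.span ℝ (p '' {k : Fin s | (k : ℕ) < n + 1}) :=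
        Submodule.span_mono hsub (IH (by omega) _ hlt)
      have hpdmem : p d ∈ Submodule.span ℝ (p '' {k : Fin s | (k : ℕ) < n + 1}) :=
        Submodule.subset_span ⟨d, by simp [hd], rfl⟩
      have : r = (r - c • p d) + c • p d := by ring
      rw [this]
      exact Submodule.add_mem _ hmem (Submodule.smul_mem _ _ hpdmem)

private lemma opr_inner_zero (s : ℕ) (f : Polynomial ℝ) (S : Set (Polynomial ℝ))
    (h : ∀ g ∈ S, ∑ x ∈ Finset.range s, f.eval (x : ℝ) * g.eval (x : ℝ) = 0) :
    ∀ r ∈ Submodule.span ℝ S, ∑ x ∈ Finset.range s, f.eval (x : ℝ) * r.eval (x : ℝ) = 0 := by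
  intro r hr
  induction hr using Submodule.span_induction with
  | mem g hg => exact h g hg
  | zero => simp
  | add a b _ _ ha hb => simp [mul_add, Finset.sum_add_distrib, ha, hb]
  | smul c a _ ha =>
    have : ∑ x ∈ Finset.range s, f.eval (x : ℝ) * (c • a).eval (x : ℝ)
        = c * ∑ x ∈ Finset.range s, f.eval (x : ℝ) * a.eval (x : ℝ) := by
      rw [Finset.mul_sum]
      refine Finset.sum_congr rfl fun x _ => ?_
      simp [Polynomial.smul_eq_C_mul]
      ring
    rw [this, ha, mul_zero]

private lemma opr_reflect (s : ℕ) (f g : Polynomial ℝ) :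
    ∑ x ∈ Finset.range s, f.eval ((s : ℝ) - 1 - (x : ℕ)) * g.eval (x : ℝ)
      = ∑ x ∈ Finset.range s, f.eval (x : ℝ) * g.eval ((s : ℝ) - 1 - (x : ℕ)) := by
  rw [← Finset.sum_range_reflect
    (fun x : ℕ => f.eval (x : ℝ) * g.eval ((s : ℝ) - 1 - (x : ℕ))) s]
  refine Finset.sum_congr rfl fun x hx => ?_
  rw [Finset.mem_range] at hx
  have h1 : ((s - 1 - x : ℕ) : ℝ) = (s : ℝ) - 1 - (x : ℝ) := by
    rw [Nat.sub_sub, Nat.cast_sub (by omega : 1 + x ≤ s)]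
    push_cast
    ring
  rw [h1, show (s : ℝ) - 1 - ((s : ℝ) - 1 - (x : ℝ)) = (x : ℝ) by ring]

/-- A system of orthonormal polynomial contrasts `p_0, …, p_{s-1}`
on the evenly spaced levels `{0, 1, …, s-1}` (with `p_j` of degree exactly `j`)
satisfies the reflection identity `p_j(s - 1 - X) = (-1)^j · p_j(X)`. -/
theorem orthogonal_polynomial_reflection
    (s : ℕ) (hs : 1 ≤ s) (p : Fin s → Polynomial ℝ)
    (hdeg : ∀ j : Fin s, (p j).degree = ((j : ℕ) : WithBot ℕ))
    (horth : ∀ u v : Fin s,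
      ∑ x ∈ Finset.range s, (p u).eval (x : ℝ) * (p v).eval (x : ℝ) =
        if u = v then (s : ℝ) else 0) :
    ∀ j : Fin s,
      (p j).comp (Polynomial.C ((s : ℝ) - 1) - Polynomial.X) =
        (-1 : Polynomial ℝ) ^ (j : ℕ) * p j := by
  have key : ∀ n : ℕ, ∀ j : Fin s, (j : ℕ) = n →
      (p j).comp (Polynomial.C ((s : ℝ) - 1) - Polynomial.X)
        = (-1 : Polynomial ℝ) ^ (j : ℕ) * p j := by
    intro n
    induction n using Nat.strong_induction_on with
    | _ n IH =>
    intro j hj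
    set L : Polynomial ℝ := Polynomial.C ((s : ℝ) - 1) - Polynomial.X with hL
    set q := (p j).comp L with hq
    have hlin : L.degree = 1 := by
      rw [hL, show Polynomial.C ((s : ℝ) - 1) - Polynomial.X
        = -(Polynomial.X - Polynomial.C ((s : ℝ) - 1)) by ring,
        Polynomial.degree_neg, Polynomial.degree_X_sub_C]
    have hlinnat : L.natDegree = 1 := Polynomial.natDegree_eq_of_degree_eq_some hlin
    have hlc_lin : L.leadingCoeff = -1 := by
      rw [Polynomial.leadingCoeff, hlinnat, hL]
      simp [Polynomial.coeff_one]
    have hpj0 : p j ≠ 0 := by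
      intro h
      have := hdeg j
      rw [h, Polynomial.degree_zero] at this
      simp at this
    have hpjnat : (p j).natDegree = (j : ℕ) := Polynomial.natDegree_eq_of_degree_eq_some (hdeg j)
    have hlcq : q.leadingCoeff = (-1 : ℝ) ^ (j : ℕ) * (p j).leadingCoeff := by
      rw [hq, Polynomial.leadingCoeff_comp (by rw [hlinnat]; exact one_ne_zero), hlc_lin, hpjnat]
      ring
    have hq0 : q ≠ 0 := by
      intro h
      apply Polynomial.leadingCoeff_ne_zero.mpr hpj0
      have : q.leadingCoeff = 0 := by rw [h, Polynomial.leadingCoeff_zero]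
      rw [hlcq] at this
      have h2 : ((-1 : ℝ) ^ (j : ℕ)) ≠ 0 := pow_ne_zero _ (by norm_num)
      exact (mul_eq_zero.mp this).resolve_left h2
    have hdq : q.degree = ((j : ℕ) : WithBot ℕ) := by
      rw [Polynomial.degree_eq_natDegree hq0, hq, Polynomial.natDegree_comp, hpjnat, hlinnat,
        mul_one]
    have hdsm : (((-1 : ℝ) ^ (j : ℕ)) • p j).degree = ((j : ℕ) : WithBot ℕ) := by
      rw [Polynomial.smul_eq_C_mul, Polynomial.degree_C_mul (pow_ne_zero _ (by norm_num)),
        hdeg j]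
    have hlcsm : (((-1 : ℝ) ^ (j : ℕ)) • p j).leadingCoeff = q.leadingCoeff := by
      rw [Polynomial.smul_eq_C_mul, Polynomial.leadingCoeff_mul, Polynomial.leadingCoeff_C, hlcq]
    set r := q - ((-1 : ℝ) ^ (j : ℕ)) • p j with hrdef
    have hrd : r.degree < ((j : ℕ) : WithBot ℕ) := by
      have := Polynomial.degree_sub_lt (hdq.trans hdsm.symm) hq0 hlcsm.symm
      rwa [hdq] at this
    have hqeval : ∀ x : ℝ, q.eval x = (p j).eval ((s : ℝ) - 1 - x) := by
      intro x
      simp [hq, hL, Polynomial.eval_comp]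
    have hinner : ∀ i : Fin s, ∑ x ∈ Finset.range s, r.eval (x : ℝ) * (p i).eval (x : ℝ) = 0 := by
      intro i
      have hsplit : ∑ x ∈ Finset.range s, r.eval (x : ℝ) * (p i).eval (x : ℝ)
          = (∑ x ∈ Finset.range s, q.eval (x : ℝ) * (p i).eval (x : ℝ))
            - (-1 : ℝ) ^ (j : ℕ) * ∑ x ∈ Finset.range s, (p j).eval (x : ℝ) * (p i).eval (x : ℝ) := by
        rw [Finset.mul_sum, ← Finset.sum_sub_distrib]
        refine Finset.sum_congr rfl fun x _ => ?_
        simp [hrdef, Polynomial.smul_eq_C_mul]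
        ring
      by_cases hij : (i : ℕ) < (j : ℕ)
      · have hqi := IH (i : ℕ) (by omega) i rfl
        have hji : j ≠ i := fun h => by subst h; omega
        have h1 : ∑ x ∈ Finset.range s, q.eval (x : ℝ) * (p i).eval (x : ℝ)
            = ∑ x ∈ Finset.range s, (p j).eval (x : ℝ)
                * ((p i).comp L).eval (x : ℝ) := by
          have := opr_reflect s (p j) (p i)
          calc ∑ x ∈ Finset.range s, q.eval (x : ℝ) * (p i).eval (x : ℝ)
              = ∑ x ∈ Finset.range s, (p j).eval ((s : ℝ) - 1 - (x : ℕ)) * (p i).eval (x : ℝ) := by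
                refine Finset.sum_congr rfl fun x _ => by rw [hqeval]
            _ = ∑ x ∈ Finset.range s, (p j).eval (x : ℝ) * (p i).eval ((s : ℝ) - 1 - (x : ℕ)) :=
                this
            _ = ∑ x ∈ Finset.range s, (p j).eval (x : ℝ) * ((p i).comp L).eval (x : ℝ) := by
                refine Finset.sum_congr rfl fun x _ => by simp [hL, Polynomial.eval_comp]
        have h3 : ∑ x ∈ Finset.range s, (p j).eval (x : ℝ)
              * (((-1 : Polynomial ℝ) ^ (i : ℕ)) * p i).eval (x : ℝ)
            = (-1 : ℝ) ^ (i : ℕ)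
              * ∑ x ∈ Finset.range s, (p j).eval (x : ℝ) * (p i).eval (x : ℝ) := by
          rw [Finset.mul_sum]
          refine Finset.sum_congr rfl fun x _ => ?_
          simp
          ring
        rw [hsplit, h1, hqi, h3, horth j i, if_neg hji, mul_zero, mul_zero, sub_zero]
      · have hjs : (j : ℕ) ≤ s := le_of_lt j.isLt
        have hrs : r ∈ Submodule.span ℝ (p '' {k : Fin s | (k : ℕ) < (j : ℕ)}) :=
          opr_span_aux s p hdeg (j : ℕ) hjs r hrd
        have h0 : ∑ x ∈ Finset.range s, (p i).eval (x : ℝ) * r.eval (x : ℝ) = 0 := by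
          refine opr_inner_zero s (p i) _ (fun g hg => ?_) r hrs
          obtain ⟨k, hk, rfl⟩ := hg
          have hik : i ≠ k := fun h => by subst h; simp only [Set.mem_setOf_eq] at hk; omega
          rw [horth i k, if_neg hik]
        rw [← h0]
        refine Finset.sum_congr rfl fun x _ => by ring
    have hrspan : r ∈ Submodule.span ℝ (p '' {k : Fin s | (k : ℕ) < s}) := by
      refine opr_span_aux s p hdeg s le_rfl r (lt_of_lt_of_le hrd ?_)
      simp [Nat.cast_withBot, WithBot.coe_le_coe]
    have hrr : ∑ x ∈ Finset.range s, r.eval (x : ℝ) * r.eval (x : ℝ) = 0 := by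
      refine opr_inner_zero s r _ (fun g hg => ?_) r hrspan
      obtain ⟨k, _, rfl⟩ := hg
      exact hinner k
    have heval0 : ∀ x ∈ Finset.range s, r.eval (x : ℝ) = 0 := by
      intro x hx
      have h := (Finset.sum_eq_zero_iff_of_nonneg (fun y _ => mul_self_nonneg _)).mp hrr x hx
      exact mul_self_eq_zero.mp h
    have hr0 : r = 0 := by
      by_cases hrne : r = 0
      · exact hrne
      · refine Polynomial.eq_zero_of_natDegree_lt_card_of_eval_eq_zero r
          (f := fun i : Fin s => ((i : ℕ) : ℝ)) (fun a b h => ?_) (fun i => ?_) ?_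
        · exact Fin.ext (Nat.cast_injective h)
        · exact heval0 i (Finset.mem_range.mpr i.isLt)
        · rw [Fintype.card_fin]
          have : r.natDegree < (j : ℕ) := (Polynomial.natDegree_lt_iff_degree_lt hrne).mpr hrd
          omega
    have hfin : q = ((-1 : ℝ) ^ (j : ℕ)) • p j := by
      have := sub_eq_zero.mp hr0
      exact this
    rw [hfin, Polynomial.smul_eq_C_mul]
    congr 1
    simp
  intro j
  exact key (j : ℕ) j rfl
end

section
/- Let A be a nonempty factorial design with n runs in the design space D and let {C_t : t ∈ T} be an SOCB on D with coefficients b_t of A. Then Σ_{t ∈ T} (b_t / b_0)² = n_2 · N / n², where n_2 = Σ_{x ∈ D} F_A(x)². -/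
/-- **Theorem 4.1.** For a nonempty design `A` with `n` runs and SOCB
coefficients `b_t`, one has `Σ_{t ∈ T} (b_t / b_0)² = n₂ · N / n²`, where
`n₂ = Σ_{x ∈ D} F_A(x)²`. -/
theorem sum_normalized_coefficients_sq
    (k : ℕ) (hk : 1 ≤ k) (s : Fin k → ℕ) (hs : ∀ i, 1 ≤ s i)
    (C : ∀ i : Fin k, Fin (s i) → Fin (s i) → ℝ)
    (horth : ∀ (i : Fin k) (u v : Fin (s i)),
      ∑ x : Fin (s i), C i u x * C i v x = if u = v then (s i : ℝ) else 0)
    (hC0 : ∀ (i : Fin k) (x : Fin (s i)), C i ⟨0, hs i⟩ x = 1)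
    (A : Multiset (∀ i, Fin (s i))) (hA : A ≠ 0)
    (b : (∀ i, Fin (s i)) → ℝ)
    (hb : ∀ t : (∀ i, Fin (s i)),
      b t = (1 / ((∏ i, s i : ℕ) : ℝ)) * (A.map (fun x => ∏ i, C i (t i) (x i))).sum) :
    ∑ t : (∀ i, Fin (s i)), (b t / b (fun i => ⟨0, hs i⟩)) ^ 2 =
      (∑ x : (∀ i, Fin (s i)), (A.count x : ℝ) ^ 2) * ((∏ i, s i : ℕ) : ℝ) /
        (Multiset.card A : ℝ) ^ 2 := by
  classical
  set N : ℝ := ((∏ i, s i : ℕ) : ℝ) with hNdef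
  have hNpos : 0 < N := by
    have h : 0 < ∏ i, s i := Finset.prod_pos fun i _ => hs i
    rw [hNdef]; exact_mod_cast h
  have hNne : N ≠ 0 := ne_of_gt hNpos
  have hnpos : 0 < (Multiset.card A : ℝ) := by
    have : 0 < Multiset.card A := Multiset.card_pos.mpr hA
    exact_mod_cast this
  have hnne : (Multiset.card A : ℝ) ≠ 0 := ne_of_gt hnpos
  -- column orthogonality
  have col : ∀ (i : Fin k) (a c : Fin (s i)),
      ∑ u : Fin (s i), C i u a * C i u c = if a = c then (s i : ℝ) else 0 := by
    intro i a c
    have hsi : ((s i : ℝ)) ≠ 0 := by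
      have := hs i; positivity
    set M : Matrix (Fin (s i)) (Fin (s i)) ℝ := Matrix.of fun u x => C i u x with hM
    have h1 : ((s i : ℝ)⁻¹ • M) * M.transpose = 1 := by
      ext u v
      have e : ∑ x, ((s i:ℝ)⁻¹ * C i u x) * C i v x
          = (s i:ℝ)⁻¹ * ∑ x, C i u x * C i v x := by
        rw [Finset.mul_sum]; exact Finset.sum_congr rfl fun x _ => by ring
      simp only [Matrix.mul_apply, Matrix.smul_apply, Matrix.transpose_apply, hM,
        Matrix.of_apply, smul_eq_mul]
      rw [e, horth]
      by_cases h : u = v <;> simp [h, Matrix.one_apply, hsi]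
    have h2 : M.transpose * ((s i : ℝ)⁻¹ • M) = 1 := mul_eq_one_comm.mp h1
    have h3 := congrArg (fun P => P a c) h2
    simp only [Matrix.mul_apply, Matrix.smul_apply, Matrix.transpose_apply, hM,
      Matrix.of_apply, smul_eq_mul, Matrix.one_apply] at h3
    have key : (s i:ℝ)⁻¹ * ∑ u, C i u a * C i u c = if a = c then 1 else 0 := by
      rw [Finset.mul_sum, ← h3]
      exact Finset.sum_congr rfl fun u _ => by ring
    calc ∑ u, C i u a * C i u c
        = (s i:ℝ) * ((s i:ℝ)⁻¹ * ∑ u, C i u a * C i u c) := by field_simp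
      _ = (s i:ℝ) * (if a = c then 1 else 0) := by rw [key]
      _ = if a = c then (s i:ℝ) else 0 := by split <;> ring
  -- sum over all t of C_t(x) C_t(y)
  have sumC : ∀ x y : (∀ i, Fin (s i)),
      ∑ t : (∀ i, Fin (s i)), (∏ i, C i (t i) (x i)) * (∏ i, C i (t i) (y i))
      = if x = y then N else 0 := by
    intro x y
    have e1 : ∀ t : (∀ i, Fin (s i)),
        (∏ i, C i (t i) (x i)) * (∏ i, C i (t i) (y i))
        = ∏ i, (C i (t i) (x i) * C i (t i) (y i)) := fun t =>
      (Finset.prod_mul_distrib).symm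
    simp_rw [e1]
    rw [← Fintype.prod_sum (fun i u => C i u (x i) * C i u (y i))]
    simp_rw [col]
    by_cases h : x = y
    · subst h
      simp [hNdef]
    · obtain ⟨i, hi⟩ : ∃ i, x i ≠ y i := by
        by_contra hc
        push_neg at hc
        exact h (funext hc)
      rw [if_neg h]
      exact Finset.prod_eq_zero (Finset.mem_univ i) (by simp [hi])
  -- map sum formula
  have mapsum : ∀ f : (∀ i, Fin (s i)) → ℝ,
      (A.map f).sum = ∑ x : (∀ i, Fin (s i)), (A.count x : ℝ) * f x := by
    intro f
    rw [Finset.sum_multiset_map_count]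
    rw [← Finset.sum_subset (Finset.subset_univ A.toFinset)]
    · exact Finset.sum_congr rfl fun x _ => by simp [nsmul_eq_mul]
    · intro x _ hx
      simp [Multiset.count_eq_zero_of_notMem (fun h => hx (Multiset.mem_toFinset.mpr h))]
  -- b₀
  have hb0 : b (fun i => ⟨0, hs i⟩) = (Multiset.card A : ℝ) / N := by
    rw [hb]
    have e : (A.map fun x => ∏ i, C i ((fun i => (⟨0, hs i⟩ : Fin (s i))) i) (x i))
        = A.map (fun _ => (1:ℝ)) := Multiset.map_congr rfl (fun x _ => by simp [hC0])
    rw [e]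
    simp [Multiset.map_const', Multiset.sum_replicate]
    ring
  -- sum of squares of b
  have hsq : ∑ t : (∀ i, Fin (s i)), (b t)^2
      = (∑ x : (∀ i, Fin (s i)), (A.count x : ℝ) ^ 2) / N := by
    have e : ∀ t, (b t)^2 = (1/N)^2 *
        ((∑ x : (∀ i, Fin (s i)), (A.count x : ℝ) * ∏ i, C i (t i) (x i)) *
         (∑ y : (∀ i, Fin (s i)), (A.count y : ℝ) * ∏ i, C i (t i) (y i))) := by
      intro t; rw [hb, mapsum]; ring
    simp_rw [e, Finset.sum_mul_sum]
    rw [← Finset.mul_sum]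
    have big : ∑ t : (∀ i, Fin (s i)), ∑ x : (∀ i, Fin (s i)), ∑ y : (∀ i, Fin (s i)),
        ((A.count x : ℝ) * ∏ i, C i (t i) (x i)) * ((A.count y : ℝ) * ∏ i, C i (t i) (y i))
        = N * ∑ x : (∀ i, Fin (s i)), (A.count x : ℝ)^2 := by
      rw [Finset.sum_comm]
      have e2 : ∀ x : (∀ i, Fin (s i)),
          ∑ t : (∀ i, Fin (s i)), ∑ y : (∀ i, Fin (s i)),
            ((A.count x : ℝ) * ∏ i, C i (t i) (x i)) *
            ((A.count y : ℝ) * ∏ i, C i (t i) (y i))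
          = N * (A.count x : ℝ)^2 := by
        intro x
        rw [Finset.sum_comm]
        have e3 : ∀ y : (∀ i, Fin (s i)),
            ∑ t : (∀ i, Fin (s i)),
              ((A.count x : ℝ) * ∏ i, C i (t i) (x i)) *
              ((A.count y : ℝ) * ∏ i, C i (t i) (y i))
            = (A.count x : ℝ) * (A.count y : ℝ) * (if x = y then N else 0) := by
          intro y
          rw [← sumC x y, Finset.mul_sum]
          exact Finset.sum_congr rfl fun t _ => by ring
        simp_rw [e3, mul_ite, mul_zero]
        rw [Finset.sum_ite_eq Finset.univ x]
        rw [if_pos (Finset.mem_univ x)]; ring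
      simp_rw [e2]
      rw [← Finset.mul_sum]
    rw [big]
    field_simp
  -- final
  have hb0ne : b (fun i => ⟨0, hs i⟩) ≠ 0 := by
    rw [hb0]; positivity
  calc ∑ t : (∀ i, Fin (s i)), (b t / b (fun i => ⟨0, hs i⟩)) ^ 2
      = (∑ t : (∀ i, Fin (s i)), (b t)^2) / (b (fun i => ⟨0, hs i⟩))^2 := by
        rw [Finset.sum_div]; exact Finset.sum_congr rfl fun t _ => by rw [div_pow]
    _ = ((∑ x : (∀ i, Fin (s i)), (A.count x : ℝ) ^ 2) / N) / ((Multiset.card A : ℝ) / N)^2 := by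
        rw [hsq, hb0]
    _ = (∑ x : (∀ i, Fin (s i)), (A.count x : ℝ) ^ 2) * N / (Multiset.card A : ℝ) ^ 2 := by
        field_simp
end

section
/- Let A be a nonempty factorial design with n runs in the design space D that has no replicates (every point of D has multiplicity at most 1 in A), and let {C_t : t ∈ T} be an SOCB on D with coefficients b_t of A. Then Σ_{t ∈ T} (b_t / b_0)² = N / n. -/
open Matrix in
/-- Column orthogonality from row orthogonality. -/
lemma col_orth {m : ℕ} (hm : 1 ≤ m) (C : Fin m → Fin m → ℝ)
    (h : ∀ u v, ∑ x, C u x * C v x = if u = v then (m:ℝ) else 0) :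
    ∀ x y, ∑ j, C j x * C j y = if x = y then (m:ℝ) else 0 := by
  classical
  have hm0 : (m:ℝ) ≠ 0 := by positivity
  set M : Matrix (Fin m) (Fin m) ℝ := Matrix.of C with hM
  have h1 : M * Mᵀ = (m:ℝ) • 1 := by
    ext u v
    simp only [Matrix.mul_apply, Matrix.transpose_apply, Matrix.smul_apply, Matrix.one_apply,
      hM, Matrix.of_apply, h u v, smul_eq_mul]
    split <;> simp
  have h2 : M * ((m:ℝ)⁻¹ • Mᵀ) = 1 := by
    rw [Matrix.mul_smul, h1, smul_smul, inv_mul_cancel₀ hm0, one_smul]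
  have h3 : ((m:ℝ)⁻¹ • Mᵀ) * M = 1 := mul_eq_one_comm.mp h2
  have h4 : Mᵀ * M = (m:ℝ) • 1 := by
    have := congrArg (fun X : Matrix (Fin m) (Fin m) ℝ => (m:ℝ) • X) h3
    simpa [Matrix.smul_mul, smul_smul, mul_inv_cancel₀ hm0] using this
  intro x y
  have := congrFun (congrFun h4 x) y
  simpa [Matrix.mul_apply, Matrix.transpose_apply, hM, Matrix.smul_apply, Matrix.one_apply,
    smul_eq_mul, mul_ite, mul_one, mul_zero] using this


/-- For a nonempty design `A` with `n` runs and no replicates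
(every point has multiplicity at most one), the SOCB coefficients satisfy
`Σ_{t ∈ T} (b_t / b_0)² = N / n`. -/
theorem sum_normalized_coefficients_sq_no_replicates
    (k : ℕ) (hk : 1 ≤ k) (s : Fin k → ℕ) (hs : ∀ i, 1 ≤ s i)
    (C : ∀ i : Fin k, Fin (s i) → Fin (s i) → ℝ)
    (horth : ∀ (i : Fin k) (u v : Fin (s i)),
      ∑ x : Fin (s i), C i u x * C i v x = if u = v then (s i : ℝ) else 0)
    (hC0 : ∀ (i : Fin k) (x : Fin (s i)), C i ⟨0, hs i⟩ x = 1)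
    (A : Multiset (∀ i, Fin (s i))) (hA : A ≠ 0)
    (hnorep : ∀ x : (∀ i, Fin (s i)), A.count x ≤ 1)
    (b : (∀ i, Fin (s i)) → ℝ)
    (hb : ∀ t : (∀ i, Fin (s i)),
      b t = (1 / ((∏ i, s i : ℕ) : ℝ)) * (A.map (fun x => ∏ i, C i (t i) (x i))).sum) :
    ∑ t : (∀ i, Fin (s i)), (b t / b (fun i => ⟨0, hs i⟩)) ^ 2 =
      ((∏ i, s i : ℕ) : ℝ) / (Multiset.card A : ℝ) := by
  classical
  set N : ℝ := ((∏ i, s i : ℕ) : ℝ) with hNdef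
  set n : ℝ := (Multiset.card A : ℝ) with hndef
  have hN0 : 0 < N := by
    have : 0 < ∏ i, s i := Finset.prod_pos fun i _ => hs i
    rw [hNdef]; exact_mod_cast this
  have hn0 : 0 < n := by
    have : 0 < Multiset.card A := by
      rcases Multiset.exists_mem_of_ne_zero hA with ⟨x, hx⟩
      exact Multiset.card_pos.mpr hA
    rw [hndef]; exact_mod_cast this
  set a : (∀ i, Fin (s i)) → ℝ := fun x => (A.count x : ℝ) with hadef
  -- multiset sums as weighted sums over the whole design space
  have hsum : ∀ f : (∀ i, Fin (s i)) → ℝ,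
      (A.map f).sum = ∑ x : (∀ i, Fin (s i)), a x * f x := by
    intro f
    rw [Finset.sum_multiset_map_count]
    rw [Finset.sum_subset (Finset.subset_univ A.toFinset)]
    · exact Finset.sum_congr rfl fun x _ => by simp [hadef, nsmul_eq_mul]
    · intro x _ hx
      simp [Multiset.count_eq_zero_of_notMem (fun h => hx (Multiset.mem_toFinset.mpr h))]
  -- key: orthogonality of the full contrast basis in the "column" direction
  have hkey : ∀ x y : (∀ i, Fin (s i)),
      ∑ t : (∀ i, Fin (s i)), (∏ i, C i (t i) (x i)) * (∏ i, C i (t i) (y i))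
        = if x = y then N else 0 := by
    intro x y
    have h1 : ∀ t : (∀ i, Fin (s i)),
        (∏ i, C i (t i) (x i)) * (∏ i, C i (t i) (y i))
          = ∏ i, (C i (t i) (x i) * C i (t i) (y i)) := fun t =>
      (Finset.prod_mul_distrib).symm
    simp_rw [h1]
    rw [← Fintype.prod_sum fun i j => C i j (x i) * C i j (y i)]
    rw [Finset.prod_congr rfl (fun i _ => col_orth (hs i) (C i) (horth i) (x i) (y i))]
    by_cases hxy : x = y
    · subst hxy
      simp [hNdef, Nat.cast_prod]
    · rw [if_neg hxy]
      obtain ⟨i, hi⟩ : ∃ i, x i ≠ y i := by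
        by_contra h
        push_neg at h
        exact hxy (funext h)
      exact Finset.prod_eq_zero (Finset.mem_univ i) (by simp [hi])
  have hb' : ∀ t, b t = (1 / N) * ∑ x : (∀ i, Fin (s i)), a x * ∏ i, C i (t i) (x i) :=
    fun t => by rw [hb t, hsum]
  have ha_sum : ∑ x : (∀ i, Fin (s i)), a x = n := by
    have := hsum (fun _ => (1 : ℝ))
    simpa [Multiset.map_const', hndef] using this.symm
  have ha_sq : ∀ x, a x * a x = a x := by
    intro x
    rcases Nat.le_one_iff_eq_zero_or_eq_one.mp (hnorep x) with h | h <;> simp [hadef, h]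
  -- the zero coefficient
  have hb0 : b (fun i => ⟨0, hs i⟩) = n / N := by
    rw [hb']
    simp only [hC0]
    simp_rw [Finset.prod_const_one, mul_one]
    rw [ha_sum]
    ring
  -- sum of squares of coefficients
  have hS : ∑ t : (∀ i, Fin (s i)), (b t) ^ 2 = n / N := by
    have step : ∀ t : (∀ i, Fin (s i)), (b t) ^ 2
        = (1 / N) ^ 2 * ∑ x : (∀ i, Fin (s i)), ∑ y : (∀ i, Fin (s i)),
            (a x * a y) * ((∏ i, C i (t i) (x i)) * (∏ i, C i (t i) (y i))) := by
      intro t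
      have expand : (∑ x : (∀ i, Fin (s i)), a x * ∏ i, C i (t i) (x i)) ^ 2
          = ∑ x : (∀ i, Fin (s i)), ∑ y : (∀ i, Fin (s i)),
              (a x * a y) * ((∏ i, C i (t i) (x i)) * (∏ i, C i (t i) (y i))) := by
        rw [sq, Finset.sum_mul_sum]
        exact Finset.sum_congr rfl fun x _ => Finset.sum_congr rfl fun y _ => by ring
      rw [hb', mul_pow, expand]
    simp_rw [step, ← Finset.mul_sum]
    rw [Finset.sum_comm]
    have swap2 : ∀ x : (∀ i, Fin (s i)),
        ∑ t : (∀ i, Fin (s i)), ∑ y : (∀ i, Fin (s i)),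
            (a x * a y) * ((∏ i, C i (t i) (x i)) * (∏ i, C i (t i) (y i)))
          = ∑ y : (∀ i, Fin (s i)), (a x * a y) *
              ∑ t : (∀ i, Fin (s i)), (∏ i, C i (t i) (x i)) * (∏ i, C i (t i) (y i)) := by
      intro x
      rw [Finset.sum_comm]
      exact Finset.sum_congr rfl fun y _ => (Finset.mul_sum _ _ _).symm
    rw [Finset.sum_congr rfl fun x _ => swap2 x]
    simp_rw [hkey]
    have : ∀ x : (∀ i, Fin (s i)),
        ∑ y : (∀ i, Fin (s i)), (a x * a y) * (if x = y then N else 0) = a x * N := by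
      intro x
      rw [Finset.sum_eq_single x]
      · simp [ha_sq x]
      · intro y _ hy
        simp [Ne.symm hy]
      · simp
    rw [Finset.sum_congr rfl fun x _ => this x, ← Finset.sum_mul, ha_sum]
    field_simp
  -- conclude
  have hb0ne : b (fun i => ⟨0, hs i⟩) ≠ 0 := by
    rw [hb0]; positivity
  calc ∑ t : (∀ i, Fin (s i)), (b t / b (fun i => ⟨0, hs i⟩)) ^ 2
      = (∑ t : (∀ i, Fin (s i)), (b t) ^ 2) / (b (fun i => ⟨0, hs i⟩)) ^ 2 := by
        rw [Finset.sum_div]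
        exact Finset.sum_congr rfl fun t _ => by rw [div_pow]
    _ = (n / N) / (n / N) ^ 2 := by rw [hS, hb0]
    _ = N / n := by
        field_simp
end

section
/- Let A be a factorial design in the design space D and let {C_t : t ∈ T} be an OCB on D with coefficients b_t of A. Suppose that for each factor i and each pair u_i, v_i ∈ Fin (s i) there are real numbers h^{(i,u_i,v_i)}_w, w ∈ Fin (s i), such that C^i_{u_i}(x) · C^i_{v_i}(x) = Σ_{w ∈ Fin (s i)} h^{(i,u_i,v_i)}_w · C^i_w(x) for all x ∈ Fin (s i). Then for all u, v ∈ T, (1/N) · Σ_{x ∈ A} C_u(x) · C_v(x) = Σ_{w ∈ T} (Π_i h^{(i,u_i,v_i)}_{w_i}) · b_w. -/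
/-- **equation (5.1).** If for each factor `i` the products of
contrasts expand as `C^i_u · C^i_v = Σ_w h^{(i,u,v)}_w C^i_w`, then for all
`u, v ∈ T`, `(1/N) Σ_{x ∈ A} C_u(x) C_v(x) = Σ_{w ∈ T} (Π_i h^{(i,u_i,v_i)}_{w_i}) b_w`. -/
theorem correlation_formula
    (k : ℕ) (hk : 1 ≤ k) (s : Fin k → ℕ) (hs : ∀ i, 1 ≤ s i)
    (C : ∀ i : Fin k, Fin (s i) → Fin (s i) → ℝ)
    (horth : ∀ (i : Fin k) (u v : Fin (s i)),
      ∑ x : Fin (s i), C i u x * C i v x = if u = v then (s i : ℝ) else 0)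
    (A : Multiset (∀ i, Fin (s i)))
    (b : (∀ i, Fin (s i)) → ℝ)
    (hb : ∀ t : (∀ i, Fin (s i)),
      b t = (1 / ((∏ i, s i : ℕ) : ℝ)) * (A.map (fun x => ∏ i, C i (t i) (x i))).sum)
    (h : ∀ i : Fin k, Fin (s i) → Fin (s i) → Fin (s i) → ℝ)
    (hh : ∀ (i : Fin k) (u v : Fin (s i)) (x : Fin (s i)),
      C i u x * C i v x = ∑ w : Fin (s i), h i u v w * C i w x)
    (u v : ∀ i, Fin (s i)) :
    (1 / ((∏ i, s i : ℕ) : ℝ)) *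
        (A.map (fun x => (∏ i, C i (u i) (x i)) * (∏ i, C i (v i) (x i)))).sum =
      ∑ w : (∀ i, Fin (s i)), (∏ i, h i (u i) (v i) (w i)) * b w := by
  have key : ∀ x : (∀ i, Fin (s i)),
      (∏ i, C i (u i) (x i)) * (∏ i, C i (v i) (x i)) =
      ∑ w : (∀ i, Fin (s i)), (∏ i, h i (u i) (v i) (w i)) * ∏ i, C i (w i) (x i) := by
    intro x
    rw [← Finset.prod_mul_distrib]
    have : ∀ i : Fin k, C i (u i) (x i) * C i (v i) (x i)
        = ∑ w : Fin (s i), h i (u i) (v i) w * C i w (x i) := fun i => hh i (u i) (v i) (x i)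
    simp_rw [this]
    rw [Finset.prod_univ_sum]
    refine Finset.sum_congr rfl fun w _ => ?_
    rw [← Finset.prod_mul_distrib]
  simp_rw [key]
  have swap : (Multiset.map
      (fun x => ∑ w : (∀ i, Fin (s i)), (∏ i, h i (u i) (v i) (w i)) * ∏ i, C i (w i) (x i))
      A).sum = ∑ w : (∀ i, Fin (s i)),
        (Multiset.map (fun x => (∏ i, h i (u i) (v i) (w i)) * ∏ i, C i (w i) (x i)) A).sum := by
    clear hb
    induction A using Multiset.induction with
    | empty => simp
    | cons a t ih => simp [ih, Finset.sum_add_distrib]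
  rw [swap, Finset.mul_sum]
  refine Finset.sum_congr rfl fun w _ => ?_
  rw [hb w, Multiset.sum_map_mul_left]
  ring
end

section
/- Let A be a factorial design with n runs in the design space D, let {C_t : t ∈ T} be an SOCB on D with coefficients b_t of A, and let m be a positive integer with m ≤ k. Then A is an orthogonal array of strength m if and only if b_t = 0 for every t ∈ T with 1 ≤ ‖t‖₀ ≤ m, where ‖t‖₀ = |{ i : t i ≠ 0 }|. -/
lemma xu_col_orth {n : ℕ} (hn : 0 < n) (C : Fin n → Fin n → ℝ)
    (h : ∀ u v, ∑ x, C u x * C v x = if u = v then (n:ℝ) else 0) :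
    ∀ x y, ∑ u, C u x * C u y = if x = y then (n:ℝ) else 0 := by
  intro x y
  set M : Matrix (Fin n) (Fin n) ℝ := Matrix.of C with hM
  have hn' : (n:ℝ) ≠ 0 := by positivity
  have h1 : M * M.transpose = (n:ℝ) • 1 := by
    ext u v
    simp only [Matrix.mul_apply, Matrix.transpose_apply, Matrix.smul_apply, Matrix.one_apply,
      hM, Matrix.of_apply, h u v, smul_eq_mul]
    split <;> simp
  have h2 : M * ((n:ℝ)⁻¹ • M.transpose) = 1 := by
    rw [Matrix.mul_smul, h1, smul_smul, inv_mul_cancel₀ hn', one_smul]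
  have h3 : ((n:ℝ)⁻¹ • M.transpose) * M = 1 := mul_eq_one_comm.mp h2
  have h4 : M.transpose * M = (n:ℝ) • 1 := by
    have := congrArg (fun X => (n:ℝ) • X) h3
    simpa [Matrix.smul_mul, smul_smul, mul_inv_cancel₀ hn'] using this
  have h5 := congrFun (congrFun h4 x) y
  simpa [Matrix.mul_apply, Matrix.transpose_apply, Matrix.smul_apply, Matrix.one_apply,
    hM, Matrix.of_apply, smul_eq_mul, mul_comm] using h5

lemma xu_sum_ite_card {α : Type*} (A : Multiset α) (p : α → Prop) [DecidablePred p] :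
    (A.map (fun x => if p x then (1:ℝ) else 0)).sum = ((A.filter p).card : ℝ) := by
  induction A using Multiset.induction_on with
  | empty => simp
  | cons a A ih =>
    by_cases h : p a <;> simp [h, ih, add_comm]

lemma xu_sum_swap {α β : Type*} (A : Multiset α) (S : Finset β) (f : β → α → ℝ) :
    ∑ y ∈ S, (A.map (f y)).sum = (A.map (fun x => ∑ y ∈ S, f y x)).sum := by
  induction A using Multiset.induction_on with
  | empty => simp
  | cons a A ih => simp [Finset.sum_add_distrib, ih]

/-- **Xu–Wu.** A design `A` with `n` runs is an orthogonal array of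
strength `m` (for every set `S` of `m` factors and every level assignment `y`, the
number of runs agreeing with `y` on `S` is `n / Π_{i ∈ S} s i`) if and only if
`b_t = 0` for every `t ∈ T` with `1 ≤ ‖t‖₀ ≤ m`, where `‖t‖₀` is the number of
nonzero coordinates of `t`. -/
theorem orthogonal_array_iff_coefficients_vanish
    (k : ℕ) (hk : 1 ≤ k) (s : Fin k → ℕ) (hs : ∀ i, 1 ≤ s i)
    (C : ∀ i : Fin k, Fin (s i) → Fin (s i) → ℝ)
    (horth : ∀ (i : Fin k) (u v : Fin (s i)),
      ∑ x : Fin (s i), C i u x * C i v x = if u = v then (s i : ℝ) else 0)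
    (hC0 : ∀ (i : Fin k) (x : Fin (s i)), C i ⟨0, hs i⟩ x = 1)
    (A : Multiset (∀ i, Fin (s i)))
    (b : (∀ i, Fin (s i)) → ℝ)
    (hb : ∀ t : (∀ i, Fin (s i)),
      b t = (1 / ((∏ i, s i : ℕ) : ℝ)) * (A.map (fun x => ∏ i, C i (t i) (x i))).sum)
    (m : ℕ) (hm1 : 1 ≤ m) (hmk : m ≤ k) :
    (∀ S : Finset (Fin k), S.card = m → ∀ y : (∀ i, Fin (s i)),
        ((A.filter (fun x => ∀ i ∈ S, x i = y i)).card : ℝ) =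
          (Multiset.card A : ℝ) / ((∏ i ∈ S, s i : ℕ) : ℝ)) ↔
    (∀ t : (∀ i, Fin (s i)),
        1 ≤ (Finset.univ.filter (fun i : Fin k => (t i : ℕ) ≠ 0)).card →
        (Finset.univ.filter (fun i : Fin k => (t i : ℕ) ≠ 0)).card ≤ m →
        b t = 0) := by
  classical
  -- notations
  let t0 : ∀ i, Fin (s i) := fun i => ⟨0, hs i⟩
  let Mo : (∀ i, Fin (s i)) → ℝ := fun t => (A.map (fun x => ∏ i, C i (t i) (x i))).sum
  have hNne : ((∏ i, s i : ℕ) : ℝ) ≠ 0 := by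
    have : 0 < ∏ i, s i := Finset.prod_pos fun i _ => hs i
    positivity
  have hts0 : ∀ (t : ∀ i, Fin (s i)) (i : Fin k), (t i : ℕ) = 0 → ∀ z, C i (t i) z = 1 := by
    intro t i h z
    have ht : t i = ⟨0, hs i⟩ := Fin.ext h
    rw [ht]; exact hC0 i z
  have hcol : ∀ (i : Fin k) (x y : Fin (s i)),
      ∑ u, C i u x * C i u y = if x = y then (s i : ℝ) else 0 :=
    fun i => xu_col_orth (hs i) (C i) (horth i)
  have hsumC : ∀ (i : Fin k) (u : Fin (s i)), (u : ℕ) ≠ 0 → ∑ z, C i u z = 0 := by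
    intro i u hu
    have h := horth i u ⟨0, hs i⟩
    have hne : u ≠ ⟨0, hs i⟩ := fun he => hu (by rw [he])
    simpa [hC0, hne] using h
  have hrestrict : ∀ (t : ∀ i, Fin (s i)) (S : Finset (Fin k)),
      (Finset.univ.filter (fun i : Fin k => (t i : ℕ) ≠ 0)) ⊆ S →
      ∀ x : (∀ i, Fin (s i)), ∏ i, C i (t i) (x i) = ∏ i ∈ S, C i (t i) (x i) := by
    intro t S hsub x
    refine (Finset.prod_subset (Finset.subset_univ S) ?_).symm
    intro i _ hiS
    have : (t i : ℕ) = 0 := by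
      by_contra h
      exact hiS (hsub (Finset.mem_filter.mpr ⟨Finset.mem_univ i, h⟩))
    exact hts0 t i this (x i)
  -- the index sets
  let TS : Finset (Fin k) → Finset (∀ i, Fin (s i)) := fun S =>
    Fintype.piFinset (fun i => if i ∈ S then (Finset.univ : Finset (Fin (s i)))
      else {(⟨0, hs i⟩ : Fin (s i))})
  have hTS : ∀ (S : Finset (Fin k)) (t : ∀ i, Fin (s i)),
      t ∈ TS S ↔ (Finset.univ.filter (fun i : Fin k => (t i : ℕ) ≠ 0)) ⊆ S := by
    intro S t
    simp only [TS, Fintype.mem_piFinset]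
    constructor
    · intro h i hi
      have hi' : (t i : ℕ) ≠ 0 := (Finset.mem_filter.mp hi).2
      by_contra hiS
      have := h i
      rw [if_neg hiS, Finset.mem_singleton] at this
      exact hi' (by rw [this])
    · intro h i
      by_cases hiS : i ∈ S
      · simp [hiS]
      · rw [if_neg hiS, Finset.mem_singleton]
        refine Fin.ext ?_
        by_contra hne
        exact hiS (h (Finset.mem_filter.mpr ⟨Finset.mem_univ i, hne⟩))
  have ht0TS : ∀ S, t0 ∈ TS S := by
    intro S
    rw [hTS]
    intro i hi
    exact absurd rfl (Finset.mem_filter.mp hi).2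
  have hMo0 : Mo t0 = (Multiset.card A : ℝ) := by
    have : (A.map fun x => ∏ i, C i (t0 i) (x i)) = A.map (fun _ => (1:ℝ)) :=
      Multiset.map_congr rfl fun x _ => by simp [t0, hC0]
    simp [Mo, this]
  -- key expansion of counts
  have key : ∀ (S : Finset (Fin k)) (y : ∀ i, Fin (s i)),
      ((A.filter (fun x => ∀ i ∈ S, x i = y i)).card : ℝ) =
        ((∏ i ∈ S, s i : ℕ) : ℝ)⁻¹ * ∑ t ∈ TS S, (∏ i, C i (t i) (y i)) * Mo t := by
    intro S y
    have hPS : ((∏ i ∈ S, s i : ℕ) : ℝ) ≠ 0 := by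
      have : 0 < ∏ i ∈ S, s i := Finset.prod_pos fun i _ => hs i
      positivity
    rw [← xu_sum_ite_card]
    have claim : ∀ x : (∀ i, Fin (s i)), (if (∀ i ∈ S, x i = y i) then (1:ℝ) else 0)
        = ((∏ i ∈ S, s i : ℕ) : ℝ)⁻¹ *
          ∑ t ∈ TS S, (∏ i, C i (t i) (y i)) * ∏ i, C i (t i) (x i) := by
      intro x
      have e1 : ∑ t ∈ TS S, (∏ i, C i (t i) (y i)) * ∏ i, C i (t i) (x i)
          = ∑ t ∈ TS S, ∏ i, (C i (t i) (y i) * C i (t i) (x i)) := by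
        refine Finset.sum_congr rfl fun t _ => ?_
        rw [← Finset.prod_mul_distrib]
      have e0 := Finset.prod_univ_sum
        (fun i => if i ∈ S then (Finset.univ : Finset (Fin (s i)))
          else {(⟨0, hs i⟩ : Fin (s i))})
        (fun i u => C i u (y i) * C i u (x i))
      rw [e1]
      simp only [TS]
      rw [← e0]
      have e2 : ∀ i : Fin k,
          (∑ u ∈ (if i ∈ S then (Finset.univ : Finset (Fin (s i)))
              else {(⟨0, hs i⟩ : Fin (s i))}), C i u (y i) * C i u (x i))
          = if i ∈ S then (if y i = x i then ((s i : ℕ) : ℝ) else 0) else 1 := by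
        intro i
        by_cases hi : i ∈ S
        · simp only [hi, if_true]
          exact hcol i (y i) (x i)
        · simp [hi, hC0]
      rw [Finset.prod_congr rfl (fun i _ => e2 i), Finset.prod_ite_mem, Finset.univ_inter]
      have e3 : (∏ i ∈ S, if y i = x i then ((s i : ℕ) : ℝ) else 0)
          = ((∏ i ∈ S, s i : ℕ) : ℝ) * ∏ i ∈ S, (if y i = x i then (1:ℝ) else 0) := by
        push_cast
        rw [← Finset.prod_mul_distrib]
        refine Finset.prod_congr rfl fun i _ => ?_
        split <;> simp
      rw [e3, Finset.prod_boole, ← mul_assoc, inv_mul_cancel₀ hPS, one_mul]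
      have : (∀ i ∈ S, y i = x i) ↔ (∀ i ∈ S, x i = y i) := by
        constructor <;> intro h i hi <;> exact (h i hi).symm
      simp only [this]
    rw [Multiset.map_congr rfl (fun x _ => claim x), Multiset.sum_map_mul_left]
    congr 1
    rw [← xu_sum_swap]
    refine Finset.sum_congr rfl fun t _ => ?_
    rw [Multiset.sum_map_mul_left]
  constructor
  · -- OA → coefficients vanish
    intro hOA t h1 h2
    obtain ⟨S, hsub, hScard⟩ := Finset.exists_superset_card_eq h2
      (by simpa using hmk)
    rw [hb t]
    suffices hsum : (A.map (fun x => ∏ i, C i (t i) (x i))).sum = 0 by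
      rw [hsum, mul_zero]
    -- Q computed two ways
    set Q : ℝ := ∑ y : (∀ i, Fin (s i)),
      ((A.filter (fun x => ∀ i ∈ S, x i = y i)).card : ℝ) * ∏ i, C i (t i) (y i) with hQ
    have way1 : Q = 0 := by
      have hc : ∀ y : (∀ i, Fin (s i)),
          ((A.filter (fun x => ∀ i ∈ S, x i = y i)).card : ℝ) =
            (Multiset.card A : ℝ) / ((∏ i ∈ S, s i : ℕ) : ℝ) := hOA S hScard
      rw [hQ]
      rw [Finset.sum_congr rfl (fun y _ => by rw [hc y])]
      rw [← Finset.mul_sum]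
      have : ∑ y : (∀ i, Fin (s i)), ∏ i, C i (t i) (y i) = ∏ i, ∑ z, C i (t i) z := by
        rw [Finset.prod_univ_sum]
        simp [Fintype.piFinset_univ]
      rw [this]
      obtain ⟨i₀, hi₀⟩ := Finset.card_pos.mp h1
      have h0 : ∑ z, C i₀ (t i₀) z = 0 := hsumC i₀ (t i₀) (Finset.mem_filter.mp hi₀).2
      rw [Finset.prod_eq_zero (Finset.mem_univ i₀) h0, mul_zero]
    have way2 : Q = (∏ i, if i ∈ S then (1:ℝ) else ((s i : ℕ) : ℝ)) *
        (A.map (fun x => ∏ i, C i (t i) (x i))).sum := by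
      rw [hQ]
      have step1 : ∀ y : (∀ i, Fin (s i)),
          ((A.filter (fun x => ∀ i ∈ S, x i = y i)).card : ℝ) * ∏ i, C i (t i) (y i)
          = (A.map (fun x => (if (∀ i ∈ S, x i = y i) then (1:ℝ) else 0)
              * ∏ i, C i (t i) (y i))).sum := by
        intro y
        rw [Multiset.sum_map_mul_right, xu_sum_ite_card]
      rw [Finset.sum_congr rfl (fun y _ => step1 y), xu_sum_swap]
      rw [← Multiset.sum_map_mul_left]
      refine congrArg Multiset.sum (Multiset.map_congr rfl fun x _ => ?_)
      -- inner sum over y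
      have inner1 : ∀ y : (∀ i, Fin (s i)),
          (if (∀ i ∈ S, x i = y i) then (1:ℝ) else 0) * ∏ i, C i (t i) (y i)
          = (if (∀ i ∈ S, x i = y i) then (1:ℝ) else 0) * ∏ i, C i (t i) (x i) := by
        intro y
        by_cases hxy : ∀ i ∈ S, x i = y i
        · rw [if_pos hxy]
          congr 1
          rw [hrestrict t S hsub y, hrestrict t S hsub x]
          exact Finset.prod_congr rfl fun i hi => by rw [(hxy i hi)]
        · rw [if_neg hxy, zero_mul, zero_mul]
      rw [Finset.sum_congr rfl (fun y _ => inner1 y), ← Finset.sum_mul, Finset.sum_boole]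
      congr 1
      have hset : (Finset.univ.filter (fun y : (∀ i, Fin (s i)) => ∀ i ∈ S, x i = y i))
          = Fintype.piFinset (fun i => if i ∈ S then ({x i} : Finset (Fin (s i)))
              else Finset.univ) := by
        ext y
        simp only [Finset.mem_filter, Finset.mem_univ, true_and, Fintype.mem_piFinset]
        constructor
        · intro h i
          by_cases hi : i ∈ S
          · rw [if_pos hi, Finset.mem_singleton]; exact (h i hi).symm
          · rw [if_neg hi]; exact Finset.mem_univ _
        · intro h i hi
          have := h i
          rw [if_pos hi, Finset.mem_singleton] at this
          exact this.symm
      rw [hset, Fintype.card_piFinset]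
      push_cast
      refine Finset.prod_congr rfl fun i _ => ?_
      by_cases hi : i ∈ S <;> simp [hi]
    have hP'ne : (∏ i, if i ∈ S then (1:ℝ) else ((s i : ℕ) : ℝ)) ≠ 0 := by
      rw [Finset.prod_ne_zero_iff]
      intro i _
      by_cases hi : i ∈ S <;> simp [hi]
      have := hs i
      positivity
    have := way1 ▸ way2
    exact (mul_eq_zero.mp this.symm).resolve_left hP'ne
  · -- coefficients vanish → OA
    intro hvanish S hScard y
    rw [key S y]
    rw [Finset.sum_eq_single t0 ?_ ?_]
    · have h1 : (∏ i, C i (t0 i) (y i)) = 1 := by simp [t0, hC0]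
      rw [h1, one_mul, hMo0, div_eq_mul_inv, mul_comm]
    · intro t htTS htne
      have hsub : (Finset.univ.filter (fun i : Fin k => (t i : ℕ) ≠ 0)) ⊆ S := (hTS S t).mp htTS
      have hne : (Finset.univ.filter (fun i : Fin k => (t i : ℕ) ≠ 0)).Nonempty := by
        obtain ⟨i, hi⟩ := Function.ne_iff.mp htne
        refine ⟨i, Finset.mem_filter.mpr ⟨Finset.mem_univ i, ?_⟩⟩
        intro h0
        exact hi (Fin.ext h0)
      have hcard1 : 1 ≤ (Finset.univ.filter (fun i : Fin k => (t i : ℕ) ≠ 0)).card :=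
        Finset.card_pos.mpr hne
      have hcard2 : (Finset.univ.filter (fun i : Fin k => (t i : ℕ) ≠ 0)).card ≤ m := by
        rw [← hScard]
        exact Finset.card_le_card hsub
      have hbt : b t = 0 := hvanish t hcard1 hcard2
      have hMt : Mo t = 0 := by
        have := hb t
        rw [hbt] at this
        have := this.symm
        rw [one_div] at this
        have h2 := mul_eq_zero.mp this
        rcases h2 with h2 | h2
        · exact absurd h2 (inv_ne_zero hNne)
        · exact h2
      rw [hMt, mul_zero]
    · intro h
      exact absurd (ht0TS S) h
end
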